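/- Fix k ∈ (1/2,1]. Under Assumptions 1 and 2, let φ* be a maximizer of J_k over Φ with cutoff b ∈ (0,1) (i.e. φ*(u) = 1 for all u ∈ [b,1]). Then φ*(0) > 0. -/

import Mathlib

open MeasureTheory Set Filter

namespace Screening

/-- Assumption 1 on the cost function. -/
structure Assumption1 (c : ℝ → ℝ) (Qbar qbar : ℝ) : Prop where
  contDiff2 : ContDiffOn ℝ 2 c (Set.Ioi 0)
  strictMono : StrictMonoOn c (Set.Ici 0)
  strictConvex : StrictConvexOn ℝ (Set.Ici 0) c
  zero_val : c 0 = 0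
  deriv_zero : derivWithin c (Set.Ici 0) 0 = 0
  Qbar_pos : 0 < Qbar
  second_deriv_pos : ∀ x ∈ Set.Ioc (0:ℝ) Qbar, 0 < deriv (deriv c) x
  qbar_pos : 0 < qbar
  qbar_lt_Qbar : qbar < Qbar
  deriv_qbar : deriv c qbar = 1

/-- Assumption 2 (curvature condition). -/
structure Assumption2 (c : ℝ → ℝ) (qbar : ℝ) : Prop where
  contDiff3 : ContDiffOn ℝ 3 c (Set.Ioi 0)
  curvature : ∀ x ∈ Set.Ioc (0:ℝ) qbar,
    -x * deriv (deriv (deriv c)) x / deriv (deriv c) x < 2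

/-- `q` is the (unique) pointwise maximizer of `x ↦ z·x − c x` over `[0, qbar]`. -/
def IsArgmaxSelection (c : ℝ → ℝ) (qbar : ℝ) (q : ℝ → ℝ) : Prop :=
  ∀ z : ℝ, q z ∈ Set.Icc (0:ℝ) qbar ∧
    ∀ x ∈ Set.Icc (0:ℝ) qbar, z * x - c x ≤ z * q z - c (q z)

/-- Indirect profit `π(z) = z·q(z) − c(q(z))`. -/
noncomputable def piFun (c q : ℝ → ℝ) (z : ℝ) : ℝ := z * q z - c (q z)

/-- Membership in Φ: nondecreasing, `[0,1]`-valued, right-continuous on `[0,1)`. -/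
def MemPhi (φ : ℝ → ℝ) : Prop :=
  (∀ u ∈ Set.Icc (0:ℝ) 1, φ u ∈ Set.Icc (0:ℝ) 1) ∧
  MonotoneOn φ (Set.Icc (0:ℝ) 1) ∧
  ∀ u ∈ Set.Ico (0:ℝ) 1, ContinuousWithinAt φ (Set.Ici u) u

/-- The induced quantile `Q_φ`. -/
noncomputable def Qfun (φ : ℝ → ℝ) (u : ℝ) : ℝ :=
  if u < 1 then (∫ t in u..1, φ t) / (1 - u)
  else limUnder (nhdsWithin 1 (Set.Iio 1))
    (fun v => (∫ t in v..1, φ t) / (1 - v))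

/-- Seller profit `Π(φ)`. -/
noncomputable def Profit (c q φ : ℝ → ℝ) : ℝ := ∫ u in (0:ℝ)..1, piFun c q (φ u)

/-- Consumer surplus `CS(φ)`. -/
noncomputable def CS (q φ : ℝ → ℝ) : ℝ :=
  ∫ u in (0:ℝ)..1, (Qfun φ u - φ u) * q (φ u)

/-- Weighted objective `J_k(φ)`. -/
noncomputable def Jfun (c q : ℝ → ℝ) (k : ℝ) (φ : ℝ → ℝ) : ℝ :=
  k * CS q φ + (1 - k) * Profit c q φ

/-- Cumulative spillover `A_φ(u)`. -/
noncomputable def Afun (q φ : ℝ → ℝ) (u : ℝ) : ℝ :=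
  ∫ s in (0:ℝ)..u, q (φ s) / (1 - s)

/-- `q'(z) = 1 / c''(q(z))`. -/
noncomputable def qprime (c q : ℝ → ℝ) (z : ℝ) : ℝ := (deriv (deriv c) (q z))⁻¹

/-- First-variation density `H_k[φ](u)`. -/
noncomputable def Hfun (c q : ℝ → ℝ) (k : ℝ) (φ : ℝ → ℝ) (u : ℝ) : ℝ :=
  k * Afun q φ u + k * (Qfun φ u - φ u) * qprime c q (φ u) + (1 - 2*k) * q (φ u)


variable {c : ℝ → ℝ} {Qbar qbar : ℝ}

lemma Assumption1.hasDerivAt_c (hA1 : Assumption1 c Qbar qbar) {x : ℝ} (hx : (0:ℝ) < x) :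
    HasDerivAt c (deriv c x) x :=
  ((hA1.contDiff2.differentiableOn (by norm_num)).differentiableAt
    (isOpen_Ioi.mem_nhds hx)).hasDerivAt

lemma Assumption1.contOn_c' (hA1 : Assumption1 c Qbar qbar) :
    ContinuousOn (deriv c) (Set.Ioi 0) :=
  hA1.contDiff2.continuousOn_deriv_of_isOpen isOpen_Ioi (by norm_num)

lemma Assumption1.hasDerivAt_c' (hA1 : Assumption1 c Qbar qbar) {x : ℝ} (hx : (0:ℝ) < x) :
    HasDerivAt (deriv c) (deriv (deriv c) x) x :=
  ((((hA1.contDiff2.deriv_of_isOpen (m:=1) isOpen_Ioi (by norm_num))).differentiableOn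
    (by norm_num)).differentiableAt (isOpen_Ioi.mem_nhds hx)).hasDerivAt

lemma Assumption2.contOn_c'' (hA2 : Assumption2 c qbar) :
    ContinuousOn (deriv (deriv c)) (Set.Ioi 0) :=
  ((hA2.contDiff3.deriv_of_isOpen (m:=2) isOpen_Ioi (by norm_num))).continuousOn_deriv_of_isOpen
    isOpen_Ioi (by norm_num)

lemma Assumption2.hasDerivAt_c'' (hA2 : Assumption2 c qbar) {x : ℝ} (hx : (0:ℝ) < x) :
    HasDerivAt (deriv (deriv c)) (deriv (deriv (deriv c)) x) x :=
  (((((hA2.contDiff3.deriv_of_isOpen (m:=2) isOpen_Ioi (by norm_num))).deriv_of_isOpen (m:=1) isOpen_Ioi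
    (by norm_num)).differentiableOn (by norm_num)).differentiableAt
    (isOpen_Ioi.mem_nhds hx)).hasDerivAt

/-- mean value theorem for `c` on `[a,b] ⊂ (0,∞)`. -/
lemma Assumption1.mvt_c (hA1 : Assumption1 c Qbar qbar) {a b : ℝ} (ha : 0 < a) (hab : a < b) :
    ∃ ξ ∈ Set.Ioo a b, c b - c a = (b - a) * deriv c ξ := by
  obtain ⟨ξ, hξ, h⟩ := exists_hasDerivAt_eq_slope c (deriv c) hab
    (hA1.contDiff2.continuousOn.mono (fun x hx => lt_of_lt_of_le ha hx.1))
    (fun x hx => hA1.hasDerivAt_c (ha.trans hx.1))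
  refine ⟨ξ, hξ, ?_⟩
  rw [eq_div_iff (sub_ne_zero.mpr hab.ne')] at h
  linarith [h]

/-- mean value theorem for `deriv c` on `[a,b] ⊂ (0,∞)`. -/
lemma Assumption1.mvt_c' (hA1 : Assumption1 c Qbar qbar) {a b : ℝ} (ha : 0 < a) (hab : a < b) :
    ∃ ξ ∈ Set.Ioo a b, deriv c b - deriv c a = (b - a) * deriv (deriv c) ξ := by
  obtain ⟨ξ, hξ, h⟩ := exists_hasDerivAt_eq_slope (deriv c) (deriv (deriv c)) hab
    (hA1.contOn_c'.mono (fun x hx => lt_of_lt_of_le ha hx.1))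
    (fun x hx => hA1.hasDerivAt_c' (ha.trans hx.1))
  refine ⟨ξ, hξ, ?_⟩
  rw [eq_div_iff (sub_ne_zero.mpr hab.ne')] at h
  linarith [h]

lemma Assumption1.strictMonoOn_c' (hA1 : Assumption1 c Qbar qbar) :
    StrictMonoOn (deriv c) (Set.Ioc 0 Qbar) := by
  refine strictMonoOn_of_deriv_pos (convex_Ioc _ _)
    (hA1.contOn_c'.mono (fun x hx => hx.1)) (fun x hx => ?_)
  rw [interior_Ioc] at hx
  exact hA1.second_deriv_pos x ⟨hx.1, hx.2.le⟩

lemma Assumption1.c'_nonneg (hA1 : Assumption1 c Qbar qbar) {x : ℝ} (hx : x ∈ Set.Ioc (0:ℝ) Qbar) :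
    0 ≤ deriv c x := by
  obtain ⟨ξ, hξ, h⟩ := hA1.mvt_c (a := x/2) (b := x) (by linarith [hx.1]) (by linarith [hx.1])
  have hcmono : c (x/2) ≤ c x :=
    (hA1.strictMono (by simp only [Set.mem_Ici]; linarith [hx.1] : (x/2) ∈ Set.Ici (0:ℝ))
      (Set.mem_Ici.mpr hx.1.le)
      (by linarith [hx.1])).le
  have hξpos : 0 ≤ deriv c ξ := by
    have := hξ.1; have := hξ.2
    nlinarith [hx.1]
  exact le_trans hξpos ((hA1.strictMonoOn_c'.monotoneOn)
    ⟨by linarith [hξ.1, hx.1], by linarith [hξ.2, hx.2]⟩ hx hξ.2.le)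


lemma Assumption1.c_nonneg (hA1 : Assumption1 c Qbar qbar) {y : ℝ} (hy : 0 ≤ y) : 0 ≤ c y := by
  have := hA1.strictMono.monotoneOn (Set.self_mem_Ici) (Set.mem_Ici.mpr hy) hy
  rwa [hA1.zero_val] at this

lemma Assumption1.slope_mono (hA1 : Assumption1 c Qbar qbar) {y z : ℝ} (hy : 0 < y)
    (hyz : y ≤ z) : c y / y ≤ c z / z := by
  have := hA1.strictConvex.convexOn.secant_mono (a := 0) Set.self_mem_Ici
    (Set.mem_Ici.mpr hy.le) (Set.mem_Ici.mpr (hy.le.trans hyz)) hy.ne' (hy.trans_le hyz).ne' hyz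
  simpa [hA1.zero_val] using this

lemma Assumption1.slope_small (hA1 : Assumption1 c Qbar qbar) {η : ℝ} (hη : 0 < η) :
    ∃ y, 0 < y ∧ y < 1 ∧ c y / y < η := by
  set g : ℝ → ℝ := fun y => c y / y with hg
  have gmono : MonotoneOn g (Set.Ioo (0:ℝ) 1) := fun a ha b hb hab =>
    hA1.slope_mono ha.1 hab
  have gbdd : BddBelow (g '' Set.Ioo (0:ℝ) 1) := by
    refine ⟨0, fun w hw => ?_⟩
    obtain ⟨y, hy, rfl⟩ := hw
    exact div_nonneg (hA1.c_nonneg hy.1.le) hy.1.le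
  have hne : (Set.Ioo (0:ℝ) 1).Nonempty := ⟨1/2, by norm_num⟩
  have htend := MonotoneOn.tendsto_nhdsWithin_Ioo_right hne gmono gbdd
  set L := sInf (g '' Set.Ioo (0:ℝ) 1) with hL
  have hasd : HasDerivWithinAt c L (Set.Ici 0) 0 := by
    rw [hasDerivWithinAt_iff_tendsto_slope]
    have hset : (Set.Ici (0:ℝ)) \ {0} = Set.Ioi 0 := by
      ext x
      simp only [Set.mem_diff, Set.mem_Ici, Set.mem_singleton_iff, Set.mem_Ioi]
      constructor
      · rintro ⟨h1, h2⟩; exact lt_of_le_of_ne h1 (Ne.symm h2)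
      · intro h; exact ⟨h.le, h.ne'⟩
    rw [hset]
    refine htend.congr' ?_
    filter_upwards [self_mem_nhdsWithin] with y hy
    simp [hg, slope_def_field, hA1.zero_val]
  have hL0 : L = 0 := by
    rw [← hA1.deriv_zero]
    exact (hasd.derivWithin (uniqueDiffOn_Ici 0 0 Set.self_mem_Ici)).symm
  have : sInf (g '' Set.Ioo (0:ℝ) 1) < η := by rw [← hL, hL0]; exact hη
  obtain ⟨w, hw, hwη⟩ := exists_lt_of_csInf_lt (hne.image g) this
  obtain ⟨y, hy, rfl⟩ := hw
  exact ⟨y, hy.1, hy.2, hwη⟩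

lemma Assumption1.c'_small (hA1 : Assumption1 c Qbar qbar) {η : ℝ} (hη : 0 < η) :
    ∃ δ, 0 < δ ∧ δ < qbar ∧ ∀ t, 0 < t → t ≤ δ → deriv c t < η := by
  obtain ⟨y, hy0, hy1, hyη⟩ := hA1.slope_small (half_pos hη)
  refine ⟨min (y/2) (qbar/2), lt_min (by linarith) (by linarith [hA1.qbar_pos]),
    (min_le_right _ _).trans_lt (by linarith [hA1.qbar_pos]), fun t ht htδ => ?_⟩
  have h2ty : 2*t ≤ y := by
    have := (le_min_iff.mp htδ).1; linarith
  have h2tq : 2*t ≤ qbar := by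
    have := (le_min_iff.mp htδ).2; linarith
  obtain ⟨ξ, hξ, hmv⟩ := hA1.mvt_c (a := t) (b := 2*t) ht (by linarith)
  have hξQ : ξ ∈ Set.Ioc (0:ℝ) Qbar :=
    ⟨ht.trans hξ.1, hξ.2.le.trans (h2tq.trans hA1.qbar_lt_Qbar.le)⟩
  have htQ : t ∈ Set.Ioc (0:ℝ) Qbar :=
    ⟨ht, by linarith [(le_min_iff.mp htδ).2, hA1.qbar_lt_Qbar]⟩
  have h1 : deriv c t ≤ deriv c ξ := hA1.strictMonoOn_c'.monotoneOn htQ hξQ hξ.1.le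
  have hslope : c (2*t) / (2*t) ≤ c y / y := hA1.slope_mono (by linarith) h2ty
  have hct : 0 ≤ c t := hA1.c_nonneg ht.le
  have hderiv : deriv c ξ = (c (2*t) - c t)/t := by
    rw [hmv]; field_simp; ring
  have : deriv c ξ ≤ 2 * (c (2*t)/(2*t)) := by
    rw [hderiv]
    rw [div_le_iff₀ ht]
    have : 2 * (c (2*t)/(2*t)) = c (2*t) / t := by field_simp
    rw [this, div_mul_cancel₀ _ ht.ne']
    linarith
  calc deriv c t ≤ deriv c ξ := h1
    _ ≤ 2 * (c (2*t)/(2*t)) := this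
    _ ≤ 2 * (c y / y) := by linarith
    _ < η := by linarith

lemma Assumption1.c'_pos (hA1 : Assumption1 c Qbar qbar) {s : ℝ}
    (hs : s ∈ Set.Ioc (0:ℝ) Qbar) : 0 < deriv c s := by
  have h2 : (s/2) ∈ Set.Ioc (0:ℝ) Qbar := ⟨by linarith [hs.1], by linarith [hs.1, hs.2]⟩
  have := hA1.strictMonoOn_c' h2 hs (by linarith [hs.1])
  have h0 : 0 ≤ deriv c (s/2) := hA1.c'_nonneg h2
  linarith

lemma Assumption2.Gmono (hA1 : Assumption1 c Qbar qbar) (hA2 : Assumption2 c qbar) :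
    StrictMonoOn (fun t => t^2 * deriv (deriv c) t) (Set.Ioc 0 qbar) := by
  refine strictMonoOn_of_deriv_pos (convex_Ioc _ _)
    (((continuous_pow 2).continuousOn).mul (hA2.contOn_c''.mono (fun x hx => hx.1)))
    (fun x hx => ?_)
  rw [interior_Ioc] at hx
  have hd : HasDerivAt (fun t => t^2 * deriv (deriv c) t)
      (2*x*deriv (deriv c) x + x^2*deriv (deriv (deriv c)) x) x := by
    have := (hasDerivAt_pow 2 x).mul (hA2.hasDerivAt_c'' hx.1)
    refine this.congr_deriv ?_
    norm_num
  rw [hd.deriv]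
  have hcur := hA2.curvature x ⟨hx.1, hx.2.le⟩
  have hc2 : 0 < deriv (deriv c) x :=
    hA1.second_deriv_pos x ⟨hx.1, hx.2.le.trans hA1.qbar_lt_Qbar.le⟩
  rw [div_lt_iff₀ hc2] at hcur
  nlinarith [hx.1]

lemma Assumption1.exists_small_tcc (hA1 : Assumption1 c Qbar qbar) {M δ : ℝ} (hM : 0 < M)
    (hδ : 0 < δ) (hδQ : δ ≤ Qbar) :
    ∃ s, 0 < s ∧ s ≤ δ ∧ s * deriv (deriv c) s ≤ M := by
  by_contra hcon
  push_neg at hcon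
  have claim : ∀ n : ℕ, deriv c (δ/2^n) + n*(M/2) ≤ deriv c δ := by
    intro n
    induction n with
    | zero => simp
    | succ n ih =>
      have ha : (0:ℝ) < δ/2^(n+1) := by positivity
      have hab : δ/2^(n+1) < δ/2^n := by
        apply div_lt_div_of_pos_left hδ (by positivity)
        exact pow_lt_pow_right₀ (by norm_num) (Nat.lt_succ_self n)
      obtain ⟨ξ, hξ, hmv⟩ := hA1.mvt_c' ha hab
      have hbδ : δ/2^n ≤ δ := by
        apply div_le_self hδ.le
        exact one_le_pow₀ (by norm_num)
      have hξδ : ξ ≤ δ := hξ.2.le.trans hbδ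
      have hM' := hcon ξ (ha.trans hξ.1) hξδ
      have hcc : 0 < deriv (deriv c) ξ := by
        by_contra h
        push_neg at h
        nlinarith [ha.trans hξ.1]
      have hgap : M/2 ≤ deriv c (δ/2^n) - deriv c (δ/2^(n+1)) := by
        rw [hmv]
        have hba : δ/2^n - δ/2^(n+1) = δ/2^(n+1) := by
          field_simp
          ring
        rw [hba]
        have hξb : ξ < δ/2^n := hξ.2
        have h2 : δ/2^n = 2*(δ/2^(n+1)) := by field_simp; ring
        nlinarith [hM', hcc, hξ.1]
      push_cast
      linarith [ih, hgap]
  obtain ⟨n, hn⟩ := exists_nat_gt (deriv c δ * 2 / M)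
  have h0 : 0 ≤ deriv c (δ/2^n) := by
    apply hA1.c'_nonneg
    constructor
    · positivity
    · exact le_trans (div_le_self hδ.le (one_le_pow₀ (by norm_num))) hδQ
  have := claim n
  rw [div_lt_iff₀ hM] at hn
  nlinarith


variable {q : ℝ → ℝ}

lemma IsArgmaxSelection.q_mono (hq : IsArgmaxSelection c qbar q) : Monotone q := by
  intro z z' hzz'
  rcases eq_or_lt_of_le hzz' with rfl | hlt
  · exact le_refl _
  by_contra h
  push_neg at h
  have h1 := (hq z).2 (q z') (hq z').1
  have h2 := (hq z').2 (q z) (hq z).1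
  nlinarith [mul_pos (sub_pos.mpr hlt) (sub_pos.mpr h)]

lemma IsArgmaxSelection.q_zero (hA1 : Assumption1 c Qbar qbar)
    (hq : IsArgmaxSelection c qbar q) : q 0 = 0 := by
  have h := (hq 0).2 0 ⟨le_refl 0, hA1.qbar_pos.le⟩
  simp [hA1.zero_val] at h
  by_contra hne
  have hpos : 0 < q 0 := lt_of_le_of_ne (hq 0).1.1 (Ne.symm hne)
  have := hA1.strictMono (Set.self_mem_Ici) (Set.mem_Ici.mpr hpos.le) hpos
  rw [hA1.zero_val] at this
  linarith

lemma IsArgmaxSelection.pi_sub_ge (hq : IsArgmaxSelection c qbar q) (z z' : ℝ) :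
    (z' - z) * q z ≤ piFun c q z' - piFun c q z := by
  have := (hq z').2 (q z) (hq z).1
  unfold piFun
  nlinarith

lemma IsArgmaxSelection.pi_mono (hq : IsArgmaxSelection c qbar q) {z z' : ℝ} (hz : 0 ≤ z)
    (hzz' : z ≤ z') : piFun c q z ≤ piFun c q z' := by
  have h := hq.pi_sub_ge z z'
  nlinarith [(hq z).1.1]

lemma IsArgmaxSelection.q_pos (hA1 : Assumption1 c Qbar qbar)
    (hq : IsArgmaxSelection c qbar q) {z : ℝ} (hz : 0 < z) : 0 < q z := by
  obtain ⟨y, hy0, _, hslope⟩ := hA1.slope_small hz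
  set y' := min y qbar with hy'
  have hy'0 : 0 < y' := lt_min hy0 hA1.qbar_pos
  have hy'y : y' ≤ y := min_le_left _ _
  have hsl : c y' / y' < z := lt_of_le_of_lt (hA1.slope_mono hy'0 hy'y) hslope
  have hcy' : c y' < z * y' := by
    rw [div_lt_iff₀ hy'0] at hsl
    linarith
  have h := (hq z).2 y' ⟨hy'0.le, min_le_right _ _⟩
  have hgain : 0 < z * q z - c (q z) := by linarith
  by_contra hle
  push_neg at hle
  have : q z = 0 := le_antisymm hle (hq z).1.1
  rw [this, hA1.zero_val] at hgain
  simp at hgain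

lemma IsArgmaxSelection.q_crit (hA1 : Assumption1 c Qbar qbar)
    (hq : IsArgmaxSelection c qbar q) {z : ℝ} (hz : 0 < z) (hlt : q z < qbar) :
    deriv c (q z) = z := by
  have hq0 : 0 < q z := hq.q_pos hA1 hz
  have hmax : IsLocalMax (fun x => z * x - c x) (q z) := by
    have hmo : IsMaxOn (fun x => z * x - c x) (Set.Icc 0 qbar) (q z) := by
      intro x hx
      exact (hq z).2 x hx
    exact hmo.isLocalMax (Icc_mem_nhds hq0 hlt)
  have hd : HasDerivAt (fun x => z * x - c x) (z - deriv c (q z)) (q z) := by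
    have h1 : HasDerivAt (fun x : ℝ => z * x) z (q z) := by
      simpa using (hasDerivAt_id (q z)).const_mul z
    exact h1.sub (hA1.hasDerivAt_c hq0)
  have := hmax.hasDerivAt_eq_zero hd
  linarith

lemma IsArgmaxSelection.q_deriv (hA1 : Assumption1 c Qbar qbar)
    (hq : IsArgmaxSelection c qbar q) {s : ℝ} (hs0 : 0 < s) (hsq : s < qbar) :
    q (deriv c s) = s := by
  set ε := deriv c s with hε
  have hsQ : s ∈ Set.Ioc (0:ℝ) Qbar := ⟨hs0, (hsq.trans hA1.qbar_lt_Qbar).le⟩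
  have hε0 : 0 < ε := hA1.c'_pos hsQ
  set h : ℝ → ℝ := fun x => ε * x - c x with hh
  have hcont : ContinuousOn h (Set.Ioi 0) :=
    (continuous_const.mul continuous_id).continuousOn.sub hA1.contDiff2.continuousOn
  have hderiv : ∀ x, 0 < x → HasDerivAt h (ε - deriv c x) x := fun x hx => by
    have h1 : HasDerivAt (fun y : ℝ => ε * y) ε x := by
      simpa using (hasDerivAt_id x).const_mul ε
    exact h1.sub (hA1.hasDerivAt_c hx)
  have hinc : StrictMonoOn h (Set.Ioc 0 s) := by
    refine strictMonoOn_of_deriv_pos (convex_Ioc _ _)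
      (hcont.mono (fun x hx => hx.1)) (fun x hx => ?_)
    rw [interior_Ioc] at hx
    rw [(hderiv x hx.1).deriv]
    have : deriv c x < deriv c s :=
      hA1.strictMonoOn_c' ⟨hx.1, hx.2.le.trans hsQ.2⟩ hsQ hx.2
    linarith
  have hdec : StrictAntiOn h (Set.Icc s qbar) := by
    refine strictAntiOn_of_deriv_neg (convex_Icc _ _)
      (hcont.mono (fun x hx => lt_of_lt_of_le hs0 hx.1)) (fun x hx => ?_)
    rw [interior_Icc] at hx
    rw [(hderiv x (hs0.trans hx.1)).deriv]
    have : deriv c s < deriv c x := hA1.strictMonoOn_c' hsQ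
      ⟨hs0.trans hx.1, (hx.2.trans hA1.qbar_lt_Qbar).le⟩ hx.1
    linarith
  have hhs : 0 < h s := by
    obtain ⟨y, hy0, _, hslope⟩ := hA1.slope_small hε0
    set y' := min y s with hy'
    have hy'0 : 0 < y' := lt_min hy0 hs0
    have hsl : c y' / y' < ε := lt_of_le_of_lt (hA1.slope_mono hy'0 (min_le_left _ _)) hslope
    have hcy' : c y' < ε * y' := by
      rw [div_lt_iff₀ hy'0] at hsl
      linarith
    have hy's : y' ≤ s := min_le_right _ _
    have h1 : 0 < h y' := by simp only [hh]; linarith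
    rcases eq_or_lt_of_le hy's with heq | hlt
    · rwa [heq] at h1
    · exact h1.trans (hinc ⟨hy'0, hy's⟩ ⟨hs0, le_refl s⟩ hlt)
  have hws : h s ≤ h (q ε) := (hq ε).2 s ⟨hs0.le, hsq.le⟩
  rcases lt_trichotomy (q ε) s with hlt | heq | hgt
  · rcases eq_or_lt_of_le (hq ε).1.1 with heq0 | hpos
    · rw [← heq0] at hws
      simp only [hh] at hws hhs
      rw [hA1.zero_val] at hws
      simp at hws
      linarith
    · have := hinc ⟨hpos, hlt.le⟩ ⟨hs0, le_refl s⟩ hlt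
      linarith
  · exact heq
  · have := hdec ⟨le_refl s, hsq.le⟩ ⟨hgt.le, (hq ε).1.2⟩ hgt
    linarith

lemma IsArgmaxSelection.key_bound (hA1 : Assumption1 c Qbar qbar) (hA2 : Assumption2 c qbar)
    (hq : IsArgmaxSelection c qbar q) {s : ℝ} (hs0 : 0 < s) (hsq : s < qbar)
    {z : ℝ} (hz0 : 0 ≤ z) (hzε : z < deriv c s) :
    (deriv c s - z) * q z ≤
      (max (2*s*deriv (deriv c) s) (4*deriv c s)) * (q (deriv c s) - q z) := by
  set ε := deriv c s with hε
  set B := max (2*s*deriv (deriv c) s) (4*deriv c s) with hB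
  have hsQ : s ∈ Set.Ioc (0:ℝ) Qbar := ⟨hs0, (hsq.trans hA1.qbar_lt_Qbar).le⟩
  have hε0 : 0 < ε := hA1.c'_pos hsQ
  have hqε : q ε = s := hq.q_deriv hA1 hs0 hsq
  have hB0 : 0 < B := lt_of_lt_of_le (by linarith : (0:ℝ) < 4*ε) (le_max_right _ _)
  rcases hz0.eq_or_lt with heq | hzpos
  · rw [← heq, hq.q_zero hA1, hqε]
    simp
    positivity
  · set t := q z with ht
    have ht0 : 0 < t := hq.q_pos hA1 hzpos
    have hts : t ≤ s := by rw [← hqε]; exact hq.q_mono hzε.le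
    have htqbar : t < qbar := lt_of_le_of_lt hts hsq
    have hcrit : deriv c t = z := hq.q_crit hA1 hzpos htqbar
    have htlt : t < s := by
      rcases eq_or_lt_of_le hts with heq2 | h
      · exfalso
        rw [heq2] at hcrit
        exact hzε.ne (by rw [hε]; exact hcrit.symm)
      · exact h
    obtain ⟨ξ, hξ, hmv⟩ := hA1.mvt_c' ht0 htlt
    rw [hcrit] at hmv
    have hξ0 : 0 < ξ := ht0.trans hξ.1
    have hξs : ξ < s := hξ.2
    have hξqbar : ξ ∈ Set.Ioc (0:ℝ) qbar := ⟨hξ0, (hξs.trans hsq).le⟩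
    have hccξ : 0 < deriv (deriv c) ξ :=
      hA1.second_deriv_pos ξ ⟨hξ0, hξqbar.2.trans hA1.qbar_lt_Qbar.le⟩
    have hccs : 0 < deriv (deriv c) s :=
      hA1.second_deriv_pos s ⟨hs0, hsQ.2⟩
    have claim : ξ * deriv (deriv c) ξ ≤ B := by
      rcases le_or_gt (s/2) ξ with hge | hlt2
      · have hGmono := (hA2.Gmono hA1).monotoneOn hξqbar ⟨hs0, hsq.le⟩ hξs.le
        have : ξ * deriv (deriv c) ξ ≤ 2*s*deriv (deriv c) s := by
          nlinarith [mul_le_mul_of_nonneg_right hge (mul_pos hξ0 hccξ).le, hGmono, hs0]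
        exact this.trans (le_max_left _ _)
      · obtain ⟨η, hη, hmv2⟩ := hA1.mvt_c' hξ0 (by linarith : ξ < 2*ξ)
        have hη0 : 0 < η := hξ0.trans hη.1
        have hηs : η < s := by linarith [hη.2]
        have hηqbar : η ∈ Set.Ioc (0:ℝ) qbar := ⟨hη0, (hηs.trans hsq).le⟩
        have hGmono := (hA2.Gmono hA1).monotoneOn hξqbar hηqbar hη.1.le
        have hccη : 0 < deriv (deriv c) η :=
          hA1.second_deriv_pos η ⟨hη0, hηqbar.2.trans hA1.qbar_lt_Qbar.le⟩
        have h4 : η^2 ≤ 4*ξ^2 := by nlinarith [hη.2, hη0]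
        have hstep : deriv (deriv c) ξ ≤ 4 * deriv (deriv c) η := by
          nlinarith [hGmono, mul_le_mul_of_nonneg_right h4 hccη.le, mul_pos hξ0 hξ0]
        have hc'2ξ : deriv c (2*ξ) ≤ deriv c s := by
          apply (hA1.strictMonoOn_c'.monotoneOn)
            ⟨by linarith, by linarith [hsQ.2]⟩ hsQ (by linarith)
        have hc'ξ : 0 ≤ deriv c ξ :=
          hA1.c'_nonneg ⟨hξ0, hξqbar.2.trans hA1.qbar_lt_Qbar.le⟩
        have : ξ * deriv (deriv c) ξ ≤ 4*deriv c s := by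
          nlinarith [hmv2, mul_le_mul_of_nonneg_left hstep hξ0.le]
        exact this.trans (le_max_right _ _)
    have htξ : t ≤ ξ := hξ.1.le
    rw [hqε]
    have hccξnn : 0 ≤ deriv (deriv c) ξ := hccξ.le
    nlinarith [hmv, claim, htξ, hccξ, htlt]


/-- Pure-arithmetic core of the pointwise comparison. -/
lemma core_ineq {k b ε B qz qε Qφ Qψ πz πε z : ℝ}
    (hk1 : 1/2 < k) (hk2 : k ≤ 1)
    (hqz0 : 0 ≤ qz) (hqzε : qz ≤ qε)
    (hQφ : 1 - b ≤ Qφ) (hQψ : Qφ ≤ Qψ)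
    (hεb : ε ≤ (1-b)/2)
    (hπ : (ε - z) * qz ≤ πε - πz)
    (hkey : (ε - z) * qz ≤ B * (qε - qz))
    (hκB : (2*k-1) * B ≤ k*(1-b)/4) :
    k*(1-b)/4 * (qε - qz) ≤
      (k * ((Qψ - ε) * qε) + (1-k) * πε) - (k * ((Qφ - z) * qz) + (1-k) * πz) := by
  have hqε0 : 0 ≤ qε := le_trans hqz0 hqzε
  have hk0 : 0 < k := by linarith
  have t5 : k * ((Qφ - ε) * qε) ≤ k * ((Qψ - ε) * qε) :=
    mul_le_mul_of_nonneg_left (mul_le_mul_of_nonneg_right (by linarith) hqε0) hk0.le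
  have t4 : (1-k) * ((ε - z) * qz) ≤ (1-k) * (πε - πz) :=
    mul_le_mul_of_nonneg_left hπ (by linarith)
  have t2 : (2*k-1) * ((ε - z) * qz) ≤ (2*k-1) * (B * (qε - qz)) :=
    mul_le_mul_of_nonneg_left hkey (by linarith)
  have t3 : ((2*k-1) * B) * (qε - qz) ≤ (k*(1-b)/4) * (qε - qz) :=
    mul_le_mul_of_nonneg_right hκB (by linarith)
  have t1 : (k*((1-b)/2)) * (qε - qz) ≤ (k*(Qφ - ε)) * (qε - qz) :=
    mul_le_mul_of_nonneg_right (mul_le_mul_of_nonneg_left (by linarith) hk0.le) (by linarith)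
  nlinarith [t1, t2, t3, t4, t5]

variable {φ : ℝ → ℝ}

lemma MemPhi.intInt (hφ : MemPhi φ) {u v : ℝ} (hu : 0 ≤ u) (huv : u ≤ v) (hv : v ≤ 1) :
    IntervalIntegrable φ volume u v := by
  apply MonotoneOn.intervalIntegrable
  rw [Set.uIcc_of_le huv]
  exact hφ.2.1.mono (Set.Icc_subset_Icc hu hv)

lemma MemPhi.Qfun_eq (hφ : MemPhi φ) {u : ℝ} (hu : u < 1) :
    Qfun φ u = (∫ t in u..1, φ t) / (1 - u) := if_pos hu

lemma MemPhi.Qfun_bounds (hφ : MemPhi φ) {u : ℝ} (hu : u ∈ Set.Ico (0:ℝ) 1) :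
    0 ≤ Qfun φ u ∧ Qfun φ u ≤ 1 := by
  have h1u : (0:ℝ) < 1 - u := by linarith [hu.2]
  have hint := hφ.intInt hu.1 hu.2.le le_rfl
  rw [hφ.Qfun_eq hu.2]
  constructor
  · apply div_nonneg _ h1u.le
    exact intervalIntegral.integral_nonneg hu.2.le
      (fun x hx => (hφ.1 x ⟨hu.1.trans hx.1, hx.2⟩).1)
  · rw [div_le_one h1u]
    calc (∫ t in u..1, φ t) ≤ ∫ t in u..1, (1:ℝ) :=
          intervalIntegral.integral_mono_on hu.2.le hint intervalIntegrable_const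
            (fun x hx => (hφ.1 x ⟨hu.1.trans hx.1, hx.2⟩).2)
      _ = 1 - u := by simp

lemma MemPhi.Qfun_le_Qfun {ψ : ℝ → ℝ} (hφ : MemPhi φ) (hψ : MemPhi ψ)
    (hle : ∀ x ∈ Set.Icc (0:ℝ) 1, φ x ≤ ψ x) {u : ℝ} (hu : u ∈ Set.Ico (0:ℝ) 1) :
    Qfun φ u ≤ Qfun ψ u := by
  have h1u : (0:ℝ) < 1 - u := by linarith [hu.2]
  rw [hφ.Qfun_eq hu.2, hψ.Qfun_eq hu.2]
  gcongr
  exact intervalIntegral.integral_mono_on hu.2.le (hφ.intInt hu.1 hu.2.le le_rfl)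
    (hψ.intInt hu.1 hu.2.le le_rfl) (fun x hx => hle x ⟨hu.1.trans hx.1, hx.2⟩)

lemma MemPhi.Qfun_ge (hφ : MemPhi φ) {b : ℝ} (hb0 : 0 < b) (hb1 : b < 1)
    (htop : ∀ x ∈ Set.Icc b 1, φ x = 1) {u : ℝ} (hu : u ∈ Set.Ico (0:ℝ) 1) :
    1 - b ≤ Qfun φ u := by
  set m := max u b with hm
  have hum : u ≤ m := le_max_left _ _
  have hm1 : m ≤ 1 := max_le hu.2.le hb1.le
  have hm0 : 0 ≤ m := hu.1.trans hum
  have hsplit := intervalIntegral.integral_add_adjacent_intervals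
    (hφ.intInt hu.1 hum hm1) (hφ.intInt hm0 hm1 le_rfl)
  have h2 : (∫ t in m..1, φ t) = 1 - m := by
    have : (∫ t in m..1, φ t) = ∫ t in m..1, (1:ℝ) := by
      apply intervalIntegral.integral_congr
      intro x hx
      rw [Set.uIcc_of_le hm1] at hx
      exact htop x ⟨(le_max_right u b).trans hx.1, hx.2⟩
    rw [this]
    simp
  have h3 : 0 ≤ ∫ t in u..m, φ t := intervalIntegral.integral_nonneg hum
    (fun x hx => (hφ.1 x ⟨hu.1.trans hx.1, hx.2.trans hm1⟩).1)
  have h1u : (0:ℝ) < 1 - u := by linarith [hu.2]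
  rw [hφ.Qfun_eq hu.2, le_div_iff₀ h1u]
  have hmb : (1-b)*(1-u) ≤ 1 - m := by
    rcases le_total u b with h | h
    · rw [hm, max_eq_right h]
      nlinarith [hu.1]
    · rw [hm, max_eq_left h]
      nlinarith [hu.2.le]
  linarith [hsplit, h2, h3]

lemma MemPhi.Qfun_continuousOn (hφ : MemPhi φ) :
    ContinuousOn (Qfun φ) (Set.Ico 0 1) := by
  have hint : IntegrableOn φ (Set.uIcc (0:ℝ) 1) volume := by
    rw [Set.uIcc_of_le zero_le_one,
      ← intervalIntegrable_iff_integrableOn_Icc_of_le zero_le_one]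
    exact hφ.intInt le_rfl zero_le_one le_rfl
  have hprim : ContinuousOn (fun x => ∫ t in x..1, φ t) (Set.Icc 0 1) := by
    have := intervalIntegral.continuousOn_primitive_interval_left (f := φ) (a := 0) (b := 1) (μ := volume) hint
    rwa [Set.uIcc_of_le zero_le_one] at this
  apply ContinuousOn.congr
    ((hprim.mono Set.Ico_subset_Icc_self).div
      ((continuous_const.sub continuous_id).continuousOn)
      (fun x hx => sub_ne_zero.mpr (ne_of_gt hx.2)))
  intro x hx
  exact if_pos hx.2

lemma MemPhi.CS_integrand_intInt {c q : ℝ → ℝ} {qbar : ℝ} (hφ : MemPhi φ)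
    (hq : IsArgmaxSelection c qbar q) :
    IntervalIntegrable (fun u => (Qfun φ u - φ u) * q (φ u)) volume 0 1 := by
  rw [intervalIntegrable_iff_integrableOn_Ioo_of_le zero_le_one]
  have hres : volume.restrict (Set.Ioo (0:ℝ) 1) ≤ volume.restrict (Set.Ioc (0:ℝ) 1) :=
    Measure.restrict_mono Set.Ioo_subset_Ioc_self le_rfl
  have hφm : AEStronglyMeasurable φ (volume.restrict (Set.Ioo (0:ℝ) 1)) :=
    (hφ.intInt le_rfl zero_le_one le_rfl).1.aestronglyMeasurable.mono_measure hres
  have hqφint : IntervalIntegrable (fun u => q (φ u)) volume 0 1 := by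
    apply MonotoneOn.intervalIntegrable
    rw [Set.uIcc_of_le zero_le_one]
    exact fun x hx y hy hxy => hq.q_mono (hφ.2.1 hx hy hxy)
  have hqφm : AEStronglyMeasurable (fun u => q (φ u)) (volume.restrict (Set.Ioo (0:ℝ) 1)) :=
    hqφint.1.aestronglyMeasurable.mono_measure hres
  have hQm : AEStronglyMeasurable (Qfun φ) (volume.restrict (Set.Ioo (0:ℝ) 1)) :=
    ((hφ.Qfun_continuousOn.mono Set.Ioo_subset_Ico_self).aestronglyMeasurable
      measurableSet_Ioo)
  refine Integrable.mono' (g := fun _ => qbar) ?_ ((hQm.sub hφm).mul hqφm) ?_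
  · exact integrableOn_const (measure_Ioo_lt_top.ne)
  · rw [ae_restrict_iff' measurableSet_Ioo]
    apply ae_of_all
    intro x hx
    have hx01 : x ∈ Set.Ico (0:ℝ) 1 := ⟨hx.1.le, hx.2⟩
    have hbnd := hφ.Qfun_bounds hx01
    have hφx := hφ.1 x ⟨hx.1.le, hx.2.le⟩
    have hqx := (hq (φ x)).1
    rw [Real.norm_eq_abs, abs_mul]
    have h1 : |Qfun φ x - φ x| ≤ 1 :=
      abs_le.mpr ⟨by linarith [hbnd.1, hφx.2], by linarith [hbnd.2, hφx.1]⟩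
    have h2 : |q (φ x)| ≤ qbar := by rw [abs_of_nonneg hqx.1]; exact hqx.2
    calc |Qfun φ x - φ x| * |q (φ x)| ≤ 1 * qbar :=
          mul_le_mul h1 h2 (abs_nonneg _) zero_le_one
      _ = qbar := one_mul _

lemma MemPhi.Profit_integrand_intInt {c q : ℝ → ℝ} {Qbar qbar : ℝ}
    (hA1 : Assumption1 c Qbar qbar) (hφ : MemPhi φ)
    (hq : IsArgmaxSelection c qbar q) :
    IntervalIntegrable (fun u => piFun c q (φ u)) volume 0 1 := by
  apply MonotoneOn.intervalIntegrable
  rw [Set.uIcc_of_le zero_le_one]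
  intro x hx y hy hxy
  exact hq.pi_mono (hφ.1 x hx).1 (hφ.2.1 hx hy hxy)


/-- For `k ∈ (1/2,1]`, under Assumptions 1 and 2, any maximizer `φ*` of
`J_k` over `Φ` with cutoff `b ∈ (0,1)` (i.e. `φ* ≡ 1` on `[b,1]`) satisfies
`φ*(0) > 0`. -/
theorem endpoint_positivity
    (c : ℝ → ℝ) (Qbar qbar : ℝ) (q : ℝ → ℝ)
    (hA1 : Assumption1 c Qbar qbar)
    (hA2 : Assumption2 c qbar)
    (hq : IsArgmaxSelection c qbar q)
    (k : ℝ) (hk : k ∈ Set.Ioc (1/2 : ℝ) 1)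
    (φ : ℝ → ℝ) (hφ : MemPhi φ)
    (hmax : ∀ ψ : ℝ → ℝ, MemPhi ψ → Jfun c q k ψ ≤ Jfun c q k φ)
    (b : ℝ) (hb : b ∈ Set.Ioo (0:ℝ) 1)
    (htop : ∀ u ∈ Set.Icc b 1, φ u = 1) :
    0 < φ 0 := by
  by_contra h0
  push_neg at h0
  have hφ0 : φ 0 = 0 := le_antisymm h0 (hφ.1 0 ⟨le_refl 0, zero_le_one⟩).1
  obtain ⟨hk1, hk2⟩ := hk
  obtain ⟨hb0, hb1⟩ := hb
  have hκ : 0 < 2*k - 1 := by linarith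
  have hk0 : 0 < k := by linarith
  have h1b : 0 < 1 - b := by linarith
  -- Step 1: choose `s` small and set `ε := c'(s)`
  set K := min ((1-b)/2) (min (k*(1-b)/(16*(2*k-1))) (1/2)) with hKdef
  have hK0 : 0 < K := by
    apply lt_min (by linarith)
    exact lt_min (by positivity) (by norm_num)
  obtain ⟨δ, hδ0, hδq, hδsmall⟩ := hA1.c'_small hK0
  have hM2 : 0 < k*(1-b)/(8*(2*k-1)) := by positivity
  obtain ⟨s, hs0, hsδ, hsM⟩ := hA1.exists_small_tcc hM2 hδ0 (hδq.trans hA1.qbar_lt_Qbar).le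
  have hsq : s < qbar := lt_of_le_of_lt hsδ hδq
  have hsQ : s ∈ Set.Ioc (0:ℝ) Qbar := ⟨hs0, (hsq.trans hA1.qbar_lt_Qbar).le⟩
  set ε := deriv c s with hεdef
  have hε0 : 0 < ε := hA1.c'_pos hsQ
  have hεK : ε < K := hδsmall s hs0 hsδ
  have hεb : ε ≤ (1-b)/2 := hεK.le.trans (min_le_left _ _)
  have hεhalf : ε ≤ 1/2 := hεK.le.trans ((min_le_right _ _).trans (min_le_right _ _))
  have hεsixteen : ε ≤ k*(1-b)/(16*(2*k-1)) :=
    hεK.le.trans ((min_le_right _ _).trans (min_le_left _ _))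
  have hqε : q ε = s := hq.q_deriv hA1 hs0 hsq
  set B := max (2*s*deriv (deriv c) s) (4*ε) with hBdef
  have hκB : (2*k-1) * B ≤ k*(1-b)/4 := by
    have e1 : k*(1-b)/(4*(2*k-1)) = 2*(k*(1-b)/(8*(2*k-1))) := by
      field_simp
      ring
    have e2 : k*(1-b)/(4*(2*k-1)) = 4*(k*(1-b)/(16*(2*k-1))) := by
      field_simp
      ring
    have h1 : B ≤ k*(1-b)/(4*(2*k-1)) :=
      max_le (by linarith [hsM]) (by linarith [hεsixteen])
    have e3 : (2*k-1)*(k*(1-b)/(4*(2*k-1))) = k*(1-b)/4 := by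
      field_simp
    calc (2*k-1) * B ≤ (2*k-1)*(k*(1-b)/(4*(2*k-1))) :=
          mul_le_mul_of_nonneg_left h1 hκ.le
      _ = k*(1-b)/4 := e3
  -- Step 2: the perturbed mechanism
  set ψ := fun u => max (φ u) ε with hψdef
  have hψmem : MemPhi ψ := by
    refine ⟨fun u hu => ?_, fun u hu v hv huv => ?_, fun u hu => ?_⟩
    · have h := hφ.1 u hu
      exact ⟨le_trans h.1 (le_max_left _ _), max_le h.2 (by linarith)⟩
    · exact max_le_max (hφ.2.1 hu hv huv) le_rfl
    · exact (hφ.2.2 u hu).max continuousWithinAt_const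
  have hφψle : ∀ x ∈ Set.Icc (0:ℝ) 1, φ x ≤ ψ x := fun x _ => le_max_left _ _
  -- integrability of the four integrands
  have hFφint : IntervalIntegrable (fun u => (Qfun φ u - φ u) * q (φ u)) volume 0 1 :=
    hφ.CS_integrand_intInt hq
  have hFψint : IntervalIntegrable (fun u => (Qfun ψ u - ψ u) * q (ψ u)) volume 0 1 :=
    hψmem.CS_integrand_intInt hq
  have hPφint : IntervalIntegrable (fun u => piFun c q (φ u)) volume 0 1 :=
    hφ.Profit_integrand_intInt hA1 hq
  have hPψint : IntervalIntegrable (fun u => piFun c q (ψ u)) volume 0 1 :=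
    hψmem.Profit_integrand_intInt hA1 hq
  set hfun : ℝ → ℝ := fun u =>
    (k * ((Qfun ψ u - ψ u) * q (ψ u)) + (1-k) * piFun c q (ψ u)) -
    (k * ((Qfun φ u - φ u) * q (φ u)) + (1-k) * piFun c q (φ u)) with hfundef
  have hIψ : IntervalIntegrable
      (fun u => k * ((Qfun ψ u - ψ u) * q (ψ u)) + (1-k) * piFun c q (ψ u)) volume 0 1 :=
    (hFψint.const_mul k).add (hPψint.const_mul (1-k))
  have hIφ : IntervalIntegrable
      (fun u => k * ((Qfun φ u - φ u) * q (φ u)) + (1-k) * piFun c q (φ u)) volume 0 1 :=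
    (hFφint.const_mul k).add (hPφint.const_mul (1-k))
  have hIh : IntervalIntegrable hfun volume 0 1 := hIψ.sub hIφ
  clear_value hfun
  -- J difference equals the integral of hfun
  have hJ : Jfun c q k ψ - Jfun c q k φ = ∫ u in (0:ℝ)..1, hfun u := by
    rw [hfundef]
    rw [intervalIntegral.integral_sub hIψ hIφ,
      intervalIntegral.integral_add (hFψint.const_mul k) (hPψint.const_mul (1-k)),
      intervalIntegral.integral_add (hFφint.const_mul k) (hPφint.const_mul (1-k)),
      intervalIntegral.integral_const_mul, intervalIntegral.integral_const_mul,
      intervalIntegral.integral_const_mul, intervalIntegral.integral_const_mul]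
    unfold Jfun CS Profit
    ring
  -- the pointwise lower bound
  have hcore : ∀ u ∈ Set.Ico (0:ℝ) 1, φ u < ε →
      k*(1-b)/4 * (q ε - q (φ u)) ≤ hfun u := by
    intro u hu hlt
    have hu01 : u ∈ Set.Icc (0:ℝ) 1 := ⟨hu.1, hu.2.le⟩
    have hz01 := hφ.1 u hu01
    have hψu : ψ u = ε := by
      simp only [hψdef]
      exact max_eq_right hlt.le
    have hqz0 : 0 ≤ q (φ u) := (hq (φ u)).1.1
    have hqzε : q (φ u) ≤ q ε := hq.q_mono hlt.le
    have hQφb : 1 - b ≤ Qfun φ u := hφ.Qfun_ge hb0 hb1 htop hu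
    have hQψφ : Qfun φ u ≤ Qfun ψ u := hφ.Qfun_le_Qfun hψmem hφψle hu
    have hπ := hq.pi_sub_ge (φ u) ε
    have hkey := hq.key_bound hA1 hA2 hs0 hsq hz01.1 (hεdef ▸ hlt)
    rw [← hεdef] at hkey
    have := core_ineq hk1 hk2 hqz0 hqzε hQφb hQψφ hεb hπ hkey hκB
    calc k*(1-b)/4 * (q ε - q (φ u))
        ≤ (k * ((Qfun ψ u - ε) * q ε) + (1-k) * piFun c q ε) -
          (k * ((Qfun φ u - φ u) * q (φ u)) + (1-k) * piFun c q (φ u)) := this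
      _ = hfun u := by rw [hfundef]; simp only [hψu]
  have hnn : ∀ u ∈ Set.Ico (0:ℝ) 1, 0 ≤ hfun u := by
    intro u hu
    rcases lt_or_ge (φ u) ε with hlt | hge
    · have h1 := hcore u hu hlt
      have h2 : 0 ≤ k*(1-b)/4 * (q ε - q (φ u)) := by
        apply mul_nonneg (by positivity)
        exact sub_nonneg.mpr (hq.q_mono hlt.le)
      linarith
    · have hψu : ψ u = φ u := by
        simp only [hψdef]
        exact max_eq_left hge
      have hQψφ : Qfun φ u ≤ Qfun ψ u := hφ.Qfun_le_Qfun hψmem hφψle hu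
      have hqz0 : 0 ≤ q (φ u) := (hq (φ u)).1.1
      rw [hfundef]
      simp only [hψu]
      nlinarith [mul_nonneg (mul_nonneg hk0.le (sub_nonneg.mpr hQψφ)) hqz0]
  -- Step 3: window of strict improvement near 0
  have hT : Tendsto φ (nhdsWithin 0 (Set.Ici 0)) (nhds 0) := by
    have := hφ.2.2 0 ⟨le_rfl, zero_lt_one⟩
    rwa [ContinuousWithinAt, hφ0] at this
  have hev : ∀ᶠ x in nhdsWithin 0 (Set.Ici 0), φ x < ε/2 :=
    hT.eventually_lt_const (by positivity)
  obtain ⟨r, hr0, hr⟩ := Metric.mem_nhdsWithin_iff.mp hev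
  set u2 := min (r/2) (1/2) with hu2def
  have hu2pos : 0 < u2 := lt_min (by linarith) (by norm_num)
  have hu21 : u2 < 1 := lt_of_le_of_lt (min_le_right _ _) (by norm_num)
  have hφu2 : φ u2 < ε/2 := by
    apply hr
    constructor
    · rw [Metric.mem_ball, Real.dist_eq, sub_zero, abs_of_pos hu2pos]
      calc u2 ≤ r/2 := min_le_left _ _
        _ < r := by linarith
    · exact hu2pos.le
  set u1 := u2/2 with hu1def
  have hu1pos : 0 < u1 := by rw [hu1def]; linarith
  have hu12 : u1 ≤ u2 := by rw [hu1def]; linarith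
  -- strict gap
  have hqhalf_lt : q (ε/2) < s := by
    have hle : q (ε/2) ≤ s := by
      rw [← hqε]
      exact hq.q_mono (by linarith)
    rcases eq_or_lt_of_le hle with heq | h
    · exfalso
      have hcrit := hq.q_crit hA1 (by positivity : 0 < ε/2) (by rw [heq]; exact hsq)
      rw [heq] at hcrit
      rw [← hεdef] at hcrit
      linarith
    · exact h
  set m := (k*(1-b)/4) * (q ε - q (ε/2)) with hmdef
  clear_value m
  have hm0 : 0 < m := by
    rw [hmdef]
    apply mul_pos (by positivity)
    rw [hqε]
    linarith
  have hwind : ∀ u ∈ Set.Icc u1 u2, m ≤ hfun u := by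
    intro u hu
    have hu01 : u ∈ Set.Icc (0:ℝ) 1 := ⟨hu1pos.le.trans hu.1, hu.2.trans hu21.le⟩
    have hu2m : u2 ∈ Set.Icc (0:ℝ) 1 := ⟨hu2pos.le, hu21.le⟩
    have hφmono := hφ.2.1 hu01 hu2m hu.2
    have hzhalf : φ u ≤ ε/2 := hφmono.trans hφu2.le
    have hlt : φ u < ε := by linarith
    have h1 := hcore u ⟨hu01.1, lt_of_le_of_lt hu.2 hu21⟩ hlt
    have h2 : q (φ u) ≤ q (ε/2) := hq.q_mono hzhalf
    have h3 : m ≤ k*(1-b)/4 * (q ε - q (φ u)) := by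
      rw [hmdef]
      apply mul_le_mul_of_nonneg_left _ (by positivity)
      linarith
    linarith
  -- Step 4: integral estimates
  have hsubI : ∀ a b' : ℝ, 0 ≤ a → a ≤ b' → b' ≤ 1 →
      IntervalIntegrable hfun volume a b' := by
    intro a b' ha hab hb'
    apply hIh.mono_set
    rw [Set.uIcc_of_le hab, Set.uIcc_of_le zero_le_one]
    exact Set.Icc_subset_Icc ha hb'
  have hsplit1 := intervalIntegral.integral_add_adjacent_intervals
    (hsubI 0 u1 le_rfl hu1pos.le (hu12.trans hu21.le))
    (hsubI u1 u2 hu1pos.le hu12 hu21.le)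
  have hsplit2 := intervalIntegral.integral_add_adjacent_intervals
    (hsubI 0 u2 le_rfl hu2pos.le hu21.le)
    (hsubI u2 1 hu2pos.le hu21.le le_rfl)
  have hI1 : 0 ≤ ∫ u in (0:ℝ)..u1, hfun u :=
    intervalIntegral.integral_nonneg hu1pos.le
      (fun x hx => hnn x ⟨hx.1, lt_of_le_of_lt hx.2 (lt_of_le_of_lt hu12 hu21)⟩)
  have hI2 : m * (u2 - u1) ≤ ∫ u in u1..u2, hfun u := by
    have := intervalIntegral.integral_mono_on hu12 intervalIntegrable_const
      (hsubI u1 u2 hu1pos.le hu12 hu21.le) (g := hfun) (f := fun _ => m) hwind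
    rw [intervalIntegral.integral_const] at this
    rw [mul_comm]
    simpa using this
  have hI3 : 0 ≤ ∫ u in u2..1, hfun u := by
    apply intervalIntegral.integral_nonneg_of_ae_restrict hu21.le
    rw [Measure.restrict_congr_set Ico_ae_eq_Icc.symm]
    have hae : ∀ᵐ x ∂(volume.restrict (Set.Ico u2 1)), 0 ≤ hfun x := by
      rw [ae_restrict_iff' measurableSet_Ico]
      exact ae_of_all _ (fun x hx => hnn x ⟨hu2pos.le.trans hx.1, hx.2⟩)
    filter_upwards [hae] with x hx using hx
  have hpos : 0 < ∫ u in (0:ℝ)..1, hfun u := by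
    have hm2 : 0 < m * (u2 - u1) := by
      apply mul_pos hm0
      rw [hu1def]
      linarith
    rw [← hsplit2, ← hsplit1]
    linarith
  have hle := hmax ψ hψmem
  rw [← hJ] at hpos
  linarith


end Screening
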